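/- Let T ∈ ℂ^{N_T×N_T} be Hermitian positive semidefinite, let λ > 0, let N_S be a positive integer with N_S ≥ rank(T), and let δ ≥ 0 be the (unique) nonnegative solution of the fixed-point equation δ = (1/N_S)·tr(T·(I_{N_T} + (λ/(1+λδ))·T)^{-1}). Then ρ̄(λ,T,N_S,δ) ≤ log det(I_{N_T} + λ·T), where ρ̄(λ,T,N_S,δ) = log det(I_{N_T} + (λ/(1+λδ))T) + N_S·log(1+λδ) − N_S·λδ/(1+λδ). -/

import Mathlib

open Matrix
open scoped ComplexOrder

/-- The fixed-point equation `δ = (1/N_S)·tr(T·(I + (ρ/(1+ρδ))·T)⁻¹)`. -/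
def FixedPointEq {n : ℕ} (T : Matrix (Fin n) (Fin n) ℂ) (ρ : ℝ) (NS : ℕ) (δ : ℝ) : Prop :=
  (δ : ℂ) = (NS : ℂ)⁻¹ * (T * (1 + ((ρ / (1 + ρ * δ) : ℝ) : ℂ) • T)⁻¹).trace

/-- `ρ̄(λ,T,N_S,δ)`, the closed-form per-eigenvalue sensing mutual information (eq. (7)). -/
noncomputable def rhoBar {n : ℕ} (lam : ℝ) (T : Matrix (Fin n) (Fin n) ℂ)
    (NS : ℕ) (δ : ℝ) : ℝ :=
  Real.log ((1 + ((lam / (1 + lam * δ) : ℝ) : ℂ) • T).det.re)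
    + (NS : ℝ) * Real.log (1 + lam * δ) - (NS : ℝ) * (lam * δ / (1 + lam * δ))

section aux

variable {n : ℕ} {T : Matrix (Fin n) (Fin n) ℂ}

lemma conj_one_add_smul (hT : T.IsHermitian) (c : ℝ) :
    (1 : Matrix (Fin n) (Fin n) ℂ) + (c : ℂ) • T =
      (hT.eigenvectorUnitary : Matrix (Fin n) (Fin n) ℂ) *
        diagonal (fun i => 1 + (c : ℂ) * (hT.eigenvalues i : ℂ)) *
        (star hT.eigenvectorUnitary : Matrix (Fin n) (Fin n) ℂ) := by
  have hU : (hT.eigenvectorUnitary : Matrix (Fin n) (Fin n) ℂ) *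
      (star hT.eigenvectorUnitary : Matrix (Fin n) (Fin n) ℂ) = 1 :=
    (Matrix.mem_unitaryGroup_iff).mp hT.eigenvectorUnitary.2
  have hD : diagonal (fun i => 1 + (c : ℂ) * (hT.eigenvalues i : ℂ)) =
      (1 : Matrix (Fin n) (Fin n) ℂ)
        + (c : ℂ) • diagonal (RCLike.ofReal ∘ hT.eigenvalues) := by
    rw [← Matrix.diagonal_one, ← Matrix.diagonal_smul, ← Matrix.diagonal_add]
    congr 1
  rw [hD, Matrix.mul_add, Matrix.add_mul, Matrix.mul_one, hU, Matrix.mul_smul,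
    Matrix.smul_mul, ← Unitary.conjStarAlgAut_apply (S := ℂ), ← hT.spectral_theorem]

lemma det_one_add_smul (hT : T.IsHermitian) (c : ℝ) :
    ((1 : Matrix (Fin n) (Fin n) ℂ) + (c : ℂ) • T).det
      = ∏ i, ((1 + c * hT.eigenvalues i : ℝ) : ℂ) := by
  rw [conj_one_add_smul hT c, Matrix.det_mul_right_comm]
  have hU : (hT.eigenvectorUnitary : Matrix (Fin n) (Fin n) ℂ) *
      (star hT.eigenvectorUnitary : Matrix (Fin n) (Fin n) ℂ) = 1 :=
    (Matrix.mem_unitaryGroup_iff).mp hT.eigenvectorUnitary.2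
  rw [hU, one_mul, Matrix.det_diagonal]
  push_cast
  rfl

end aux

section aux2
variable {n : ℕ} {T : Matrix (Fin n) (Fin n) ℂ}

lemma conj_mul_conj {U A B : Matrix (Fin n) (Fin n) ℂ} (hU' : star U * U = 1) :
    (U * A * star U) * (U * B * star U) = U * (A * B) * star U := by
  simp only [Matrix.mul_assoc]
  rw [← Matrix.mul_assoc (star U) U (B * star U), hU', Matrix.one_mul]

lemma trace_conj {U M : Matrix (Fin n) (Fin n) ℂ} (hU' : star U * U = 1) :
    (U * M * star U).trace = M.trace := by
  rw [Matrix.trace_mul_cycle, hU', Matrix.one_mul]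

lemma trace_mul_inv_one_add_smul (hT : T.IsHermitian) (c : ℝ)
    (hc : ∀ i, (1 : ℂ) + c * hT.eigenvalues i ≠ 0) :
    (T * ((1 : Matrix (Fin n) (Fin n) ℂ) + (c : ℂ) • T)⁻¹).trace
      = ∑ i, ((hT.eigenvalues i / (1 + c * hT.eigenvalues i) : ℝ) : ℂ) := by
  have hU' : star (hT.eigenvectorUnitary : Matrix (Fin n) (Fin n) ℂ) *
      (hT.eigenvectorUnitary : Matrix (Fin n) (Fin n) ℂ) = 1 :=
    (Matrix.mem_unitaryGroup_iff').mp hT.eigenvectorUnitary.2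
  have hinv : ((1 : Matrix (Fin n) (Fin n) ℂ) + (c : ℂ) • T)⁻¹
      = (hT.eigenvectorUnitary : Matrix (Fin n) (Fin n) ℂ) *
          diagonal (fun i => ((1 : ℂ) + c * hT.eigenvalues i)⁻¹) *
          star (hT.eigenvectorUnitary : Matrix (Fin n) (Fin n) ℂ) := by
    apply Matrix.inv_eq_right_inv
    rw [conj_one_add_smul hT c, conj_mul_conj hU', Matrix.diagonal_mul_diagonal]
    have h1 : (fun i => (1 + (c : ℂ) * (hT.eigenvalues i : ℂ)) *
        ((1 : ℂ) + c * hT.eigenvalues i)⁻¹) = fun _ => (1 : ℂ) := by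
      funext i
      exact mul_inv_cancel₀ (hc i)
    rw [h1, Matrix.diagonal_one, Matrix.mul_one]
    exact (Matrix.mem_unitaryGroup_iff).mp hT.eigenvectorUnitary.2
  rw [hinv]
  nth_rewrite 1 [hT.spectral_theorem]
  rw [Unitary.conjStarAlgAut_apply, conj_mul_conj hU']
  rw [trace_conj hU', Matrix.diagonal_mul_diagonal, Matrix.trace_diagonal]
  refine Finset.sum_congr rfl fun i _ => ?_
  push_cast
  rw [div_eq_mul_inv]
  rfl

end aux2

lemma chord_log (x y : ℝ) (hx : 0 ≤ x) (hy0 : 0 ≤ y) (hy1 : y ≤ 1) :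
    y * Real.log (1 + x) ≤ Real.log (1 + x * y) := by
  have h := (strictConcaveOn_log_Ioi.concaveOn).2 (Set.mem_Ioi.mpr one_pos)
    (Set.mem_Ioi.mpr (by linarith : (0:ℝ) < 1 + x))
    (by linarith : (0:ℝ) ≤ 1 - y) hy0 (by ring)
  have e : (1 - y) • (1:ℝ) + y • (1 + x) = 1 + x * y := by
    simp only [smul_eq_mul]; ring
  rw [e] at h
  simpa [Real.log_one, smul_eq_mul] using h


/-- **ρ̄ never exceeds the deterministic-signal term** `log det(I + λT)` (the Jensen upper
bound (5) of the paper, per eigenvalue). -/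
theorem rhoBar_le_logDet {NT : ℕ} (T : Matrix (Fin NT) (Fin NT) ℂ) (hT : T.PosSemidef)
    (lam : ℝ) (hlam : 0 < lam) (NS : ℕ) (hNS1 : 1 ≤ NS) (hNSr : T.rank ≤ NS)
    (δ : ℝ) (hδ : 0 ≤ δ) (hfix : FixedPointEq T lam NS δ) :
    rhoBar lam T NS δ ≤ Real.log ((1 + ((lam : ℝ) : ℂ) • T).det.re) := by
  classical
  have hH := hT.1
  have ht : ∀ i, 0 ≤ hH.eigenvalues i := fun i => hT.eigenvalues_nonneg i
  have hx : 0 ≤ lam * δ := mul_nonneg hlam.le hδ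
  have hc0 : (0:ℝ) < 1 + lam * δ := by linarith
  unfold rhoBar
  unfold FixedPointEq at hfix
  set t : Fin NT → ℝ := hH.eigenvalues with ht_def
  set μ : ℝ := lam / (1 + lam * δ) with hμ_def
  have hμ0 : 0 < μ := div_pos hlam hc0
  have hμt : ∀ i, (0:ℝ) < 1 + μ * t i := fun i => by nlinarith [ht i, hμ0]
  have hlamt : ∀ i, (0:ℝ) < 1 + lam * t i := fun i => by nlinarith [ht i]
  -- determinants
  rw [det_one_add_smul hH μ, det_one_add_smul hH lam,
    ← Complex.ofReal_prod, ← Complex.ofReal_prod, Complex.ofReal_re, Complex.ofReal_re,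
    Real.log_prod (fun i _ => (hμt i).ne'),
    Real.log_prod (fun i _ => (hlamt i).ne')]
  -- fixed point in ℝ
  have hcn : ∀ i, (1:ℂ) + (μ:ℂ) * (hH.eigenvalues i : ℂ) ≠ 0 := by
    intro i
    have : ((1 + μ * t i : ℝ) : ℂ) ≠ 0 := by
      rw [Complex.ofReal_ne_zero]; exact (hμt i).ne'
    simpa using this
  rw [trace_mul_inv_one_add_smul hH μ hcn] at hfix
  have hNS0 : (0:ℝ) < NS := by exact_mod_cast hNS1
  have hfixR : δ = (NS:ℝ)⁻¹ * ∑ i, t i / (1 + μ * t i) := by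
    have h2 : ((δ : ℝ) : ℂ) = (((NS:ℝ)⁻¹ * ∑ i, t i / (1 + μ * t i) : ℝ) : ℂ) := by
      push_cast at hfix ⊢
      exact hfix
    exact_mod_cast h2
  have hsum : ∑ i, t i / (1 + μ * t i) = NS * δ := by
    rw [hfixR]; field_simp
    exact Finset.sum_congr rfl fun i _ => by rw [mul_comm]
  -- per-eigenvalue split
  set q : ℝ := lam * δ / (1 + lam * δ) with hq_def
  have hq : q * (1 + lam * δ) = lam * δ := by
    rw [hq_def]; field_simp
  set y : Fin NT → ℝ := fun i => μ * t i / (1 + μ * t i) with hy_def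
  have hy0 : ∀ i, 0 ≤ y i := fun i => div_nonneg (mul_nonneg hμ0.le (ht i)) (hμt i).le
  have hy1 : ∀ i, y i ≤ 1 := fun i => by
    rw [hy_def, div_le_one (hμt i)]; linarith
  have hsplit : ∀ i, Real.log (1 + lam * t i)
      = Real.log (1 + μ * t i) + Real.log (1 + (lam * δ) * y i) := by
    intro i
    have hy' : y i * (1 + μ * t i) = μ * t i := by
      simp only [hy_def]
      exact div_mul_cancel₀ _ (hμt i).ne'
    have hμ' : μ * (1 + lam * δ) = lam := div_mul_cancel₀ _ hc0.ne'
    have he : 1 + lam * t i = (1 + μ * t i) * (1 + (lam * δ) * y i) := by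
      linear_combination (-(lam * δ)) * hy' - t i * hμ' 
    have hpos : (0:ℝ) < 1 + (lam * δ) * y i := by
      have := mul_nonneg hx (hy0 i); linarith
    rw [he, Real.log_mul (hμt i).ne' hpos.ne']
  have hsumy : ∑ i, y i = μ * (NS * δ) := by
    rw [← hsum, Finset.mul_sum]
    refine Finset.sum_congr rfl fun i _ => ?_
    simp only [hy_def]
    rw [mul_div_assoc]
  -- chord bound
  have hbound : Real.log (1 + lam * δ) * (μ * (NS * δ)) ≤ ∑ i, Real.log (1 + (lam * δ) * y i) := by
    rw [← hsumy, Finset.mul_sum]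
    refine Finset.sum_le_sum fun i _ => ?_
    rw [mul_comm]
    exact chord_log _ _ hx (hy0 i) (hy1 i)
  have hμδ : μ * (NS * δ) = (NS:ℝ) * q := by
    rw [hμ_def, hq_def]; field_simp
  -- final arithmetic
  have hL : Real.log (1 + lam * δ) ≤ lam * δ := by
    have := Real.log_le_sub_one_of_pos hc0; linarith
  have hL0 : 0 ≤ Real.log (1 + lam * δ) := Real.log_nonneg (by linarith)
  have hkey : (NS:ℝ) * Real.log (1 + lam * δ) - (NS:ℝ) * q
      ≤ Real.log (1 + lam * δ) * ((NS:ℝ) * q) := by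
    have h1 : Real.log (1 + lam * δ) * (1 - q) ≤ q := by
      have h1q : 1 - q = 1 / (1 + lam * δ) := by
        rw [hq_def]; field_simp; ring
      rw [h1q]
      have : Real.log (1 + lam * δ) * (1 / (1 + lam * δ)) ≤ (lam * δ) * (1 / (1 + lam * δ)) :=
        mul_le_mul_of_nonneg_right hL (by positivity)
      calc Real.log (1 + lam * δ) * (1 / (1 + lam * δ)) ≤ (lam * δ) * (1 / (1 + lam * δ)) := this
        _ = q := by rw [hq_def]; ring
    nlinarith [mul_le_mul_of_nonneg_left h1 hNS0.le]
  calc (∑ i, Real.log (1 + μ * t i)) + (NS:ℝ) * Real.log (1 + lam * δ) - (NS:ℝ) * q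
      ≤ (∑ i, Real.log (1 + μ * t i)) + Real.log (1 + lam * δ) * ((NS:ℝ) * q) := by linarith
    _ ≤ (∑ i, Real.log (1 + μ * t i)) + ∑ i, Real.log (1 + (lam * δ) * y i) := by
        have hbound' : Real.log (1 + lam * δ) * ((NS:ℝ) * q)
            ≤ ∑ i, Real.log (1 + (lam * δ) * y i) := by rw [← hμδ]; exact hbound
        linarith
    _ = ∑ i, Real.log (1 + lam * t i) := by
        rw [← Finset.sum_add_distrib]
        exact (Finset.sum_congr rfl fun i _ => (hsplit i).symm)
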